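/- Let S be a leaf SCC of an information-flow graph G of a single-uniprior index-coding instance, with equal message lengths q. Then broadcasting uncoded the messages of all non-leaf vertices outside leaf SCCs together with a (|S'|−1)q-bit cyclic code for each leaf SCC S' yields a valid index code, proving ℓ*(G) ≤ qn − q|L(G)| − q·(number of leaf SCCs). -/
import Mathlib


/-- A valid index code for a single-uniprior index-coding instance on the
information-flow graph `A` on `Fin n`, where message `x i` consists of `q i` uniform
bits and receiver `i` knows `x i` a priori: whenever there is an arc `(j → i)`,
receiver `i` can decode `x j` from the codeword and its own message, i.e. `x j` is
determined by `(E x, x i)`. -/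
def IsIndexCode {n : ℕ} (A : Fin n → Fin n → Prop) (q : Fin n → ℕ) {ℓ : ℕ}
    (E : (∀ i, Fin (q i) → Bool) → (Fin ℓ → Bool)) : Prop :=
  ∀ i j, A j i → ∀ x y, E x = E y → x i = y i → x j = y j

/-- The optimal index codelength `ℓ*(G)`: the minimum number of broadcast bits of a
valid index code. -/
noncomputable def optLen {n : ℕ} (A : Fin n → Fin n → Prop) (q : Fin n → ℕ) : ℕ :=
  sInf {ℓ : ℕ | ∃ E : (∀ i, Fin (q i) → Bool) → (Fin ℓ → Bool), IsIndexCode A q E}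

/-- A leaf vertex of a directed graph: a vertex with no outgoing arcs. -/
def IsLeafVertex {V : Type*} (A : V → V → Prop) (i : V) : Prop := ∀ j, ¬ A i j

/-- A strongly connected component: a nonempty set of vertices, any two of which are
mutually reachable, and which is maximal with this property. -/
def IsSCC {V : Type*} (A : V → V → Prop) (S : Set V) : Prop :=
  S.Nonempty ∧ (∀ i ∈ S, ∀ j ∈ S, Relation.ReflTransGen A i j) ∧
    ∀ k, (∀ j ∈ S, Relation.ReflTransGen A k j ∧ Relation.ReflTransGen A j k) → k ∈ S

/-- A leaf SCC: a non-trivial SCC (at least two vertices) with no arc leaving it. -/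
def IsLeafSCC {V : Type*} (A : V → V → Prop) (S : Set V) : Prop :=
  IsSCC A S ∧ (∃ i ∈ S, ∃ j ∈ S, i ≠ j) ∧ ∀ i ∈ S, ∀ j, A i j → j ∈ S

section Aux
variable {V : Type*} (A : V → V → Prop)

/-- two SCCs sharing a point are equal -/
theorem scc_eq_of_mem {S S' : Set V} (hS : IsSCC A S) (hS' : IsSCC A S')
    {x : V} (hx : x ∈ S) (hx' : x ∈ S') : S = S' := by
  have key : ∀ {T T' : Set V}, IsSCC A T → IsSCC A T' → x ∈ T → x ∈ T' → T ⊆ T' := by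
    intro T T' hT hT' hxT hxT' j hj
    refine hT'.2.2 j ?_
    intro j' hj'
    exact ⟨(hT.2.1 j hj x hxT).trans (hT'.2.1 x hxT' j' hj'),
           (hT'.2.1 j' hj' x hxT').trans (hT.2.1 x hxT j hj)⟩
  exact le_antisymm (key hS hS' hx hx') (key hS' hS hx' hx)

/-- a member of a nontrivial SCC has an outgoing arc -/
theorem not_leaf_of_mem_leafSCC {S : Set V} (hS : IsLeafSCC A S) {i : V}
    (hi : i ∈ S) : ¬ IsLeafVertex A i := by
  obtain ⟨a, ha, b, hb, hab⟩ := hS.2.1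
  have hij : ∃ j ∈ S, j ≠ i := by
    by_cases h : a = i
    · exact ⟨b, hb, fun hbi => hab (h.trans hbi.symm)⟩
    · exact ⟨a, ha, h⟩
  obtain ⟨j, hj, hji⟩ := hij
  have hr : Relation.ReflTransGen A i j := hS.1.2.1 i hi j hj
  rcases (Relation.reflTransGen_iff_eq_or_transGen).1 hr with h | h
  · exact absurd h hji
  · obtain ⟨c, hc, -⟩ := Relation.TransGen.head'_iff.1 h
    exact fun hl => hl c hc

end Aux

section Code
variable {V : Type*} (A : V → V → Prop)

noncomputable def sccBase (S : Set V) (h : IsLeafSCC A S) : V := h.1.1.choose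

theorem sccBase_mem {S : Set V} (h : IsLeafSCC A S) : sccBase A S h ∈ S := h.1.1.choose_spec

theorem sccBase_congr {S S' : Set V} (h : IsLeafSCC A S) (h' : IsLeafSCC A S')
    (e : S = S') : sccBase A S h = sccBase A S' h' := by subst e; rfl

/-- `i` lies in some leaf SCC. -/
def InLeafSCC (i : V) : Prop := ∃ S, IsLeafSCC A S ∧ i ∈ S

/-- vertices whose (possibly coded) bits are broadcast -/
def SendBit (i : V) : Prop :=
  ¬ IsLeafVertex A i ∧ ∀ S, ∀ h : IsLeafSCC A S, i ∈ S → sccBase A S h ≠ i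

end Code

section Enc
variable {n q : ℕ} (A : Fin n → Fin n → Prop)

theorem xor_cancel_left' {a b c : Bool} (h : xor c a = xor c b) : a = b := by
  cases a <;> cases b <;> cases c <;> simp_all

theorem xor_cancel_right' {a b c : Bool} (h : xor a c = xor b c) : a = b := by
  cases a <;> cases b <;> cases c <;> simp_all

open Classical in
/-- the core encoder: uncoded bits for vertices outside leaf SCCs, XOR-with-base
bits inside each leaf SCC. -/
noncomputable def Fcode (x : Fin n → Fin q → Bool)
    (p : {i : Fin n // SendBit A i} × Fin q) : Bool :=
  if h : InLeafSCC A p.1.1 then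
    xor (x p.1.1 p.2) (x (sccBase A h.choose h.choose_spec.1) p.2)
  else x p.1.1 p.2

theorem Fcode_decodes (x y : Fin n → Fin q → Bool) (hF : Fcode A x = Fcode A y)
    (i j : Fin n) (hA : A j i) (hxy : x i = y i) : x j = y j := by
  by_cases hj : InLeafSCC A j
  · -- j in a leaf SCC S; then i ∈ S too
    obtain ⟨S, hS, hjS⟩ := hj
    have hiS : i ∈ S := hS.2.2 j hjS i hA
    set b := sccBase A S hS with hb
    have hbS : b ∈ S := sccBase_mem A hS
    -- key: for every v ∈ S, xor (x v k) (x b k) = xor (y v k) (y b k)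
    have key : ∀ v ∈ S, ∀ k, xor (x v k) (x b k) = xor (y v k) (y b k) := by
      intro v hvS k
      by_cases hvb : v = b
      · subst hvb; simp
      · have hsend : SendBit A v := by
          refine ⟨not_leaf_of_mem_leafSCC A hS hvS, ?_⟩
          intro S' h' hvS' he
          have hSS' : S' = S := scc_eq_of_mem A h'.1 hS.1 hvS' hvS
          exact hvb (he.symm.trans (sccBase_congr A h' hS hSS'))
        have hv : InLeafSCC A v := ⟨S, hS, hvS⟩
        have := congrFun hF (⟨⟨v, hsend⟩, k⟩)
        rw [Fcode, Fcode] at this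
        simp only [dif_pos hv] at this
        have hSeq : hv.choose = S :=
          scc_eq_of_mem A hv.choose_spec.1.1 hS.1 hv.choose_spec.2 hvS
        have hbe : sccBase A hv.choose hv.choose_spec.1 = b :=
          sccBase_congr A hv.choose_spec.1 hS hSeq
        simpa [hbe] using this
    have hxb : ∀ k, x b k = y b k := by
      intro k
      have h1 := key i hiS k
      rw [hxy] at h1
      exact xor_cancel_left' h1
    funext k
    have h2 := key j hjS k
    rw [hxb k] at h2
    exact xor_cancel_right' h2
  · -- j outside leaf SCCs: its bits are sent uncoded
    have hsend : SendBit A j := by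
      refine ⟨fun hl => hl i hA, fun S h hjS _ => hj ⟨S, h, hjS⟩⟩
    funext k
    have := congrFun hF (⟨⟨j, hsend⟩, k⟩)
    rw [Fcode, Fcode, dif_neg hj, dif_neg hj] at this
    exact this

end Enc

section Count
variable {n : ℕ} (A : Fin n → Fin n → Prop)

theorem card_sendBit :
    Nat.card {i : Fin n // SendBit A i} =
      n - {i : Fin n | IsLeafVertex A i}.ncard - {S : Set (Fin n) | IsLeafSCC A S}.ncard := by
  classical
  set Dset : Set (Fin n) := {i | SendBit A i} with hD
  set Lset : Set (Fin n) := {i | IsLeafVertex A i} with hL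
  set Bset : Set (Fin n) := {i | ∃ S, ∃ h : IsLeafSCC A S, sccBase A S h = i} with hB
  -- Bset has the same cardinality as the set of leaf SCCs
  have hBcard : Bset.ncard = {S : Set (Fin n) | IsLeafSCC A S}.ncard := by
    set g : {S : Set (Fin n) // IsLeafSCC A S} → Fin n := fun s => sccBase A s.1 s.2 with hg
    have hginj : Function.Injective g := by
      rintro ⟨S, hS⟩ ⟨S', hS'⟩ he
      have h1 : g ⟨S, hS⟩ ∈ S := sccBase_mem A hS
      have h2 : g ⟨S, hS⟩ ∈ S' := he ▸ sccBase_mem A hS'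
      exact Subtype.ext (scc_eq_of_mem A hS.1 hS'.1 h1 h2)
    have hrange : Bset = Set.range g := by
      ext i
      constructor
      · rintro ⟨S, h, he⟩; exact ⟨⟨S, h⟩, he⟩
      · rintro ⟨⟨S, h⟩, he⟩; exact ⟨S, h, he⟩
    rw [hrange, ← Set.image_univ, Set.ncard_image_of_injective _ hginj, Set.ncard_univ,
      ← Nat.card_coe_set_eq]
    rfl
  -- the three sets are pairwise disjoint and cover univ
  have hDL : Disjoint Dset Lset := by
    rw [Set.disjoint_left]; intro i hi hl; exact hi.1 hl
  have hDB : Disjoint Dset Bset := by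
    rw [Set.disjoint_left]
    rintro i hi ⟨S, h, he⟩
    exact hi.2 S h (he ▸ sccBase_mem A h) he
  have hLB : Disjoint Lset Bset := by
    rw [Set.disjoint_left]
    rintro i hl ⟨S, h, he⟩
    exact not_leaf_of_mem_leafSCC A h (he ▸ sccBase_mem A h) hl
  have hcover : Dset ∪ Lset ∪ Bset = Set.univ := by
    ext i
    simp only [Set.mem_union, Set.mem_univ, iff_true]
    by_cases hl : IsLeafVertex A i
    · exact Or.inl (Or.inr hl)
    by_cases hb : i ∈ Bset
    · exact Or.inr hb
    · refine Or.inl (Or.inl ⟨hl, ?_⟩)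
      intro S h hiS he
      exact hb ⟨S, h, he⟩
  have h1 : (Dset ∪ Lset ∪ Bset).ncard = Dset.ncard + Lset.ncard + Bset.ncard := by
    rw [Set.ncard_union_eq (by
        rw [Set.disjoint_union_left]; exact ⟨hDB, hLB⟩) ((Dset ∪ Lset).toFinite) (Bset.toFinite),
      Set.ncard_union_eq hDL (Dset.toFinite) (Lset.toFinite)]
  rw [hcover] at h1
  have huniv : (Set.univ : Set (Fin n)).ncard = n := by
    rw [Set.ncard_univ, Nat.card_eq_fintype_card, Fintype.card_fin]
  have hDval : Nat.card {i : Fin n // SendBit A i} = Dset.ncard := by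
    rw [← Nat.card_coe_set_eq]; rfl
  rw [hDval, ← hBcard]
  omega

end Count



/-- Achievability for equal message lengths `q`: sending uncoded the messages of all
non-leaf vertices outside leaf SCCs, together with a `(|S'|−1)q`-bit cyclic code for
each leaf SCC `S'`, yields a valid index code; hence
`ℓ*(G) ≤ qn − q|L(G)| − q·(number of leaf SCCs)`. -/
theorem optLen_upper_cyclic {n q : ℕ} (A : Fin n → Fin n → Prop) :
    (∃ E : (∀ _ : Fin n, Fin q → Bool) →
        (Fin (q * n - q * {i : Fin n | IsLeafVertex A i}.ncard -
          q * {S : Set (Fin n) | IsLeafSCC A S}.ncard) → Bool),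
      IsIndexCode A (fun _ => q) E) ∧
    optLen A (fun _ => q) ≤
      q * n - q * {i : Fin n | IsLeafVertex A i}.ncard -
        q * {S : Set (Fin n) | IsLeafSCC A S}.ncard := by
  classical
  set l := q * n - q * {i : Fin n | IsLeafVertex A i}.ncard -
      q * {S : Set (Fin n) | IsLeafSCC A S}.ncard with hl
  haveI : Fintype {i : Fin n // SendBit A i} := Fintype.ofFinite _
  have hcard : Fintype.card ({i : Fin n // SendBit A i} × Fin q) = l := by
    rw [Fintype.card_prod, Fintype.card_fin, ← Nat.card_eq_fintype_card, card_sendBit, hl]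
    rw [Nat.mul_comm, Nat.mul_sub, Nat.mul_sub]
  have hle : Fintype.card (({i : Fin n // SendBit A i} × Fin q) → Bool) ≤
      Fintype.card (Fin l → Bool) := by
    rw [Fintype.card_fun, Fintype.card_fun, hcard, Fintype.card_fin]
  obtain ⟨e⟩ := Function.Embedding.nonempty_of_card_le hle
  refine ⟨⟨fun x => e (Fcode A x), ?_⟩, ?_⟩
  · intro i j hA x y hE hxy
    exact Fcode_decodes A x y (e.injective hE) i j hA hxy
  · apply Nat.sInf_le
    exact ⟨fun x => e (Fcode A x), fun i j hA x y hE hxy =>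
      Fcode_decodes A x y (e.injective hE) i j hA hxy⟩
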